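/- arXiv:1812.10242 — 2 statements merged into one kernel-verified Lean document; each statement's English description precedes it below -/
import Mathlib

section
/- Fix a field k and let n, m ∈ ℕ with m ≠ n and m ≠ n + 1. Then every short exact sequence 0 → B^m → E → B^n → 0 of (not necessarily smooth) k[I]-modules splits; that is, if a k[I]-module E has a submodule N isomorphic to B^m with E/N isomorphic to B^n, then N is a direct summand of E as a k[I]-module. -/
open scoped Classical

noncomputable section

/-- The increasing monoid `I`: the submonoid of `Function.End ℕ+` (functions under
composition) consisting of strictly increasing functions `σ : ℕ+ → ℕ+` such that
`σ n = n + ℓ` for some `ℓ` and all sufficiently large `n`. -/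
def IncMonoid : Submonoid (Function.End ℕ+) where
  carrier := {f | StrictMono f ∧ ∃ (l : ℕ) (N : ℕ+), ∀ n : ℕ+, N ≤ n → ((f n : ℕ) = (n : ℕ) + l)}
  one_mem' := ⟨fun _ _ h => h, 0, 1, fun n _ => by show ((n : ℕ+) : ℕ) = (n : ℕ) + 0; omega⟩
  mul_mem' := by
    rintro f g ⟨hf1, lf, Nf, hf2⟩ ⟨hg1, lg, Ng, hg2⟩
    refine ⟨hf1.comp hg1, lg + lf, max Nf Ng, fun n hn => ?_⟩
    have h1 : (g n : ℕ) = (n : ℕ) + lg := hg2 n (le_trans (le_max_right _ _) hn)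
    have h2 : Nf ≤ g n := by
      rw [← PNat.coe_le_coe, h1]
      have : (Nf : ℕ) ≤ (n : ℕ) := (PNat.coe_le_coe _ _).2 (le_trans (le_max_left _ _) hn)
      omega
    have h3 := hf2 (g n) h2
    show ((f (g n) : ℕ)) = (n : ℕ) + (lg + lf)
    omega

/-- The increasing monoid, as a type. -/
abbrev IncM : Type := IncMonoid

theorem IncM.strictMono (σ : IncM) : StrictMono σ.1 := σ.2.1

theorem IncM.le_apply (σ : IncM) (n : ℕ+) : n ≤ σ.1 n := by
  induction n using PNat.recOn with
  | one => exact (σ.1 1).one_le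
  | succ n ih =>
      have h2 : σ.1 n < σ.1 (n + 1) := σ.strictMono (by rw [← PNat.coe_lt_coe]; push_cast; omega)
      rw [← PNat.coe_le_coe] at *
      rw [← PNat.coe_lt_coe] at h2
      push_cast at *
      omega

/-- The underlying function of the generator `α_k`. -/
def alphaFun (k : ℕ+) : Function.End ℕ+ := fun n => if n < k then n else n + 1

theorem alphaFun_strictMono (k : ℕ+) : StrictMono (alphaFun k) := by
  intro a b hab
  unfold alphaFun
  split_ifs with h1 h2 <;>
    rw [← PNat.coe_lt_coe] at * <;> push_cast at * <;> omega

theorem alphaFun_mem (k : ℕ+) : alphaFun k ∈ IncMonoid := by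
  refine ⟨alphaFun_strictMono k, 1, k, fun n hn => ?_⟩
  unfold alphaFun
  rw [if_neg (not_lt.2 hn)]
  push_cast
  ring

/-- The generator `α_k` of the increasing monoid (`k ≥ 1`). -/
def alpha (k : ℕ+) : IncM := ⟨alphaFun k, alphaFun_mem k⟩

/-- The submonoid `I_{≥ n}` of `I` generated by the `α_i` with `i ≥ n`. -/
def Iges (n : ℕ+) : Submonoid IncM := Submonoid.closure (alpha '' Set.Ici n)

/-- The submonoid `I_{> n}` of `I` generated by the `α_i` with `i > n`. -/
def Igt (n : ℕ) : Submonoid IncM := Submonoid.closure {s | ∃ i : ℕ+, n < (i : ℕ) ∧ s = alpha i}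

/-- The monoid algebra `k[I]` of the increasing monoid. -/
abbrev IncAlg (k : Type*) [Field k] : Type _ := MonoidAlgebra k IncM

/-- The image of `σ ∈ I` in the monoid algebra `k[I]`. -/
abbrev ofInc (k : Type*) [Field k] (σ : IncM) : IncAlg k := MonoidAlgebra.of k IncM σ

/-- A `k[I]`-module is smooth if every vector is fixed by some `I_{>n}`. -/
def IsSmoothMod (k : Type*) [Field k] (M : Type*) [AddCommMonoid M]
    [Module (IncAlg k) M] : Prop :=
  ∀ x : M, ∃ n : ℕ, ∀ σ ∈ Igt n, ofInc k σ • x = x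

/-! ### The principal modules `A^r` -/

/-- Index set for the basis of the principal module `A^r`:
strictly increasing `r`-tuples of positive integers. -/
def Idx (r : ℕ) : Type := {v : Fin r → ℕ+ // StrictMono v}

/-- The action of `σ ∈ I` on the index set of `A^r`. -/
def idxAct {r : ℕ} (σ : IncM) (t : Idx r) : Idx r :=
  ⟨σ.1 ∘ t.1, (IncM.strictMono σ).comp t.2⟩

/-- The representation of the increasing monoid on the principal module `A^r`. -/
def prinRep (k : Type*) [Field k] (r : ℕ) : Representation k IncM (Idx r →₀ k) where
  toFun σ := Finsupp.lmapDomain k k (idxAct σ)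
  map_one' := LinearMap.ext fun v => by
    have h : (idxAct (1 : IncM) : Idx r → Idx r) = id := funext fun t => rfl
    simp [Finsupp.lmapDomain_apply, h, Finsupp.mapDomain_id]
  map_mul' := fun σ τ => LinearMap.ext fun v => by
    have h : (idxAct (σ * τ) : Idx r → Idx r) = (idxAct σ) ∘ (idxAct τ) :=
      funext fun t => rfl
    show Finsupp.lmapDomain k k (idxAct (σ * τ)) v =
      Finsupp.lmapDomain k k (idxAct σ) (Finsupp.lmapDomain k k (idxAct τ) v)
    simp [Finsupp.lmapDomain_apply, h, Finsupp.mapDomain_comp]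

/-- The principal module `A^r`, as a module over the monoid algebra `k[I]`. -/
abbrev PrinMod (k : Type*) [Field k] (r : ℕ) : Type _ := (prinRep k r).asModule

/-- The basis vector `e_t` of the principal module `A^r`. -/
def ePrin (k : Type*) [Field k] {r : ℕ} (t : Idx r) : PrinMod k r :=
  (prinRep k r).asModuleEquiv.symm (Finsupp.single t 1)

/-- The tuple `(1, 2, …, r)` indexing the canonical generator `e_{1,…,r}` of `A^r`. -/
def iotaIdx (r : ℕ) : Idx r :=
  ⟨fun i => ⟨(i : ℕ) + 1, Nat.succ_pos _⟩, fun a b h => by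
    show (a : ℕ) + 1 < (b : ℕ) + 1; exact Nat.succ_lt_succ h⟩

/-! ### The simple modules `B^n` -/

/-- `σ ∈ I` fixes the natural number `n`, with the convention `σ 0 = 0`. -/
def fixesNat (σ : IncM) (n : ℕ) : Prop := ∀ h : 0 < n, σ.1 ⟨n, h⟩ = ⟨n, h⟩

theorem fixesNat_mul (σ τ : IncM) (n : ℕ) :
    fixesNat (σ * τ) n ↔ fixesNat σ n ∧ fixesNat τ n := by
  rcases Nat.eq_zero_or_pos n with h0 | h0
  · subst h0
    constructor
    · exact fun _ => ⟨fun h => absurd h (lt_irrefl 0), fun h => absurd h (lt_irrefl 0)⟩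
    · exact fun _ h => absurd h (lt_irrefl 0)
  · set p : ℕ+ := ⟨n, h0⟩
    have happ : ∀ h : 0 < n, (σ * τ).1 ⟨n, h⟩ = σ.1 (τ.1 ⟨n, h⟩) := fun _ => rfl
    constructor
    · intro h
      have hfix : σ.1 (τ.1 p) = p := h h0
      have h1 : p ≤ τ.1 p := τ.le_apply p
      have h2 : τ.1 p ≤ σ.1 (τ.1 p) := σ.le_apply _
      have hτp : τ.1 p = p := le_antisymm (h2.trans_eq hfix) h1
      have hσp : σ.1 p = p := by rw [hτp] at hfix; exact hfix
      exact ⟨fun _ => hσp, fun _ => hτp⟩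
    · rintro ⟨hσ, hτ⟩ h
      rw [happ h]
      have := hτ h0
      rw [this, hσ h0]

/-- The representation of the increasing monoid on the simple module `B^n`:
`σ` acts by the identity if `σ(n) = n` (with `σ(0) = 0`) and by `0` otherwise. -/
def bRep (k : Type*) [Field k] (n : ℕ) : Representation k IncM k where
  toFun σ := if fixesNat σ n then 1 else 0
  map_one' := by
    rw [if_pos]
    intro h
    rfl
  map_mul' := fun σ τ => by
    by_cases hσ : fixesNat σ n
    · by_cases hτ : fixesNat τ n
      · rw [if_pos ((fixesNat_mul σ τ n).2 ⟨hσ, hτ⟩), if_pos hσ, if_pos hτ, one_mul]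
      · rw [if_neg (fun h => hτ ((fixesNat_mul σ τ n).1 h).2), if_pos hσ, if_neg hτ, one_mul]
    · by_cases hτ : fixesNat τ n
      · rw [if_neg (fun h => hσ ((fixesNat_mul σ τ n).1 h).1), if_neg hσ, if_pos hτ, mul_one]
      · rw [if_neg (fun h => hσ ((fixesNat_mul σ τ n).1 h).1), if_neg hσ, if_neg hτ, mul_zero]

/-- The simple module `B^n`, as a module over the monoid algebra `k[I]`. -/
abbrev BMod (k : Type*) [Field k] (n : ℕ) : Type _ := (bRep k n).asModule

namespace Ext12

lemma mul_apply (σ τ : IncM) (j : ℕ+) : (σ * τ).1 j = σ.1 (τ.1 j) := rfl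

lemma incm_ext {σ τ : IncM} (h : ∀ j, σ.1 j = τ.1 j) : σ = τ :=
  Subtype.ext (funext h)

lemma gap (σ : IncM) : ∀ (kk : ℕ) (p q : ℕ+), (q : ℕ) = (p : ℕ) + kk →
    (σ.1 p : ℕ) + kk ≤ (σ.1 q : ℕ) := by
  intro kk
  induction kk with
  | zero =>
      intro p q h
      have hpq : p = q := by apply PNat.coe_injective; omega
      rw [hpq]
      omega
  | succ k ih =>
      intro p q h
      have hq' : 0 < (p : ℕ) + k := by have := p.pos; omega
      have h1 : (σ.1 p : ℕ) + k ≤ (σ.1 ⟨(p : ℕ) + k, hq'⟩ : ℕ) := ih p ⟨(p : ℕ) + k, hq'⟩ rfl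
      have h2 : (⟨(p : ℕ) + k, hq'⟩ : ℕ+) < q := by
        apply (PNat.coe_lt_coe _ _).1
        show (p : ℕ) + k < (q : ℕ)
        omega
      have h3 := σ.strictMono h2
      rw [← PNat.coe_lt_coe] at h3
      omega

lemma le_apply' (σ : IncM) (p : ℕ+) : (p : ℕ) ≤ (σ.1 p : ℕ) := by
  have := σ.le_apply p
  rwa [← PNat.coe_le_coe] at this

lemma fix_below (σ : IncM) {p q : ℕ+} (hpq : p ≤ q) (hq : σ.1 q = q) : σ.1 p = p := by
  have h1 : (q : ℕ) = (p : ℕ) + ((q : ℕ) - (p : ℕ)) := by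
    rw [← PNat.coe_le_coe] at hpq; omega
  have h2 := gap σ ((q : ℕ) - (p : ℕ)) p q h1
  have h3 := le_apply' σ p
  have h4 : (σ.1 q : ℕ) = (q : ℕ) := by rw [hq]
  apply PNat.coe_injective
  omega

lemma fixesNat_mono {σ : IncM} {j j' : ℕ} (h : j ≤ j') (h' : fixesNat σ j') :
    fixesNat σ j := by
  intro hj
  have hj' : 0 < j' := lt_of_lt_of_le hj h
  exact fix_below σ (by apply (PNat.coe_le_coe _ _).1; exact h) (h' hj')

lemma fixesNat_alpha (i : ℕ+) (j : ℕ) : fixesNat (alpha i) j ↔ (j = 0 ∨ j < (i : ℕ)) := by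
  constructor
  · intro h
    by_cases hj : j = 0
    · exact Or.inl hj
    · right
      have hj0 : 0 < j := Nat.pos_of_ne_zero hj
      have h2 : alphaFun i ⟨j, hj0⟩ = ⟨j, hj0⟩ := h hj0
      by_contra hlt
      have hge : ¬ ((⟨j, hj0⟩ : ℕ+) < i) := by
        exact fun hh => hlt ((PNat.coe_lt_coe _ _).2 hh)
      unfold alphaFun at h2
      erw [if_neg hge] at h2
      have h3 := congrArg (fun x : ℕ+ => (x : ℕ)) h2
      exact absurd h3 (by show j + 1 ≠ j; omega)
  · rintro (hj | hj)
    · subst hj; intro h; omega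
    · intro h0
      show alphaFun i ⟨j, h0⟩ = ⟨j, h0⟩
      unfold alphaFun
      erw [if_pos ((PNat.coe_lt_coe ⟨j, h0⟩ i).1 hj)]

lemma alpha_apply_lt (i j : ℕ+) (h : j < i) : (alpha i).1 j = j := if_pos h

lemma alpha_apply_ge (i j : ℕ+) (h : ¬ j < i) : (alpha i).1 j = j + 1 := if_neg h

lemma alpha_rel {a c : ℕ+} (h : a ≤ c) : alpha a * alpha c = alpha (c + 1) * alpha a := by
  apply incm_ext
  intro j
  rw [mul_apply, mul_apply]
  show alphaFun a (alphaFun c j) = alphaFun (c + 1) (alphaFun a j)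
  unfold alphaFun
  rw [← PNat.coe_le_coe] at h
  split_ifs <;>
    first
      | rfl
      | (apply PNat.coe_injective; push_cast; omega)
      | (exfalso;
         simp only [← PNat.coe_lt_coe] at *;
         push_cast at *;
         omega)

end Ext12
namespace Ext12

/-- Insert a fixed point at position `t`, shifting `σ` up. -/
def insFun (t : ℕ+) (σ : IncM) : Function.End ℕ+ := fun j => if j ≤ t then j else σ.1 (j - 1) + 1

lemma sub_one_coe {j t : ℕ+} (h : ¬ j ≤ t) : ((j - 1 : ℕ+) : ℕ) = (j : ℕ) - 1 := by
  rw [← PNat.coe_le_coe] at h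
  have ht := t.pos
  have h1 : (1 : ℕ+) < j := by rw [← PNat.coe_lt_coe, PNat.one_coe]; omega
  rw [PNat.sub_coe, if_pos h1, PNat.one_coe]

lemma succ_sub_one (j : ℕ+) : j + 1 - 1 = j := by
  apply PNat.coe_injective
  rw [sub_one_coe (t := j) (by rw [← PNat.coe_le_coe]; push_cast; omega)]
  push_cast
  omega

lemma insFun_mem (t : ℕ+) (σ : IncM) : insFun t σ ∈ IncMonoid := by
  constructor
  · intro a b hab
    unfold insFun
    rw [← PNat.coe_lt_coe] at hab
    have ht := t.pos
    split_ifs with h1 h2 h2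
    · rwa [← PNat.coe_lt_coe]
    · rw [← PNat.coe_lt_coe]
      push_cast
      have h3 := le_apply' σ (b - 1)
      rw [sub_one_coe h2] at h3
      rw [← PNat.coe_le_coe] at h1
      omega
    · exfalso
      rw [← PNat.coe_le_coe] at h2
      rw [← PNat.coe_le_coe] at h1
      omega
    · rw [← PNat.coe_lt_coe]
      push_cast
      have hm : σ.1 (a - 1) < σ.1 (b - 1) := by
        apply σ.strictMono
        rw [← PNat.coe_lt_coe, sub_one_coe h1, sub_one_coe h2]
        rw [← PNat.coe_le_coe] at h1 h2
        omega
      rw [← PNat.coe_lt_coe] at hm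
      omega
  · obtain ⟨l, N, hN⟩ := σ.2.2
    refine ⟨l, N + t + 1, fun j hj => ?_⟩
    rw [← PNat.coe_le_coe] at hj
    push_cast at hj
    have ht := t.pos
    have hNp := N.pos
    show ((insFun t σ j : ℕ+) : ℕ) = (j : ℕ) + l
    unfold insFun
    rw [if_neg (by rw [← PNat.coe_le_coe]; omega)]
    have hj1 : ((j - 1 : ℕ+) : ℕ) = (j : ℕ) - 1 :=
      sub_one_coe (t := t) (by rw [← PNat.coe_le_coe]; omega)
    have h5 := hN (j - 1) (by rw [← PNat.coe_le_coe, hj1]; omega)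
    rw [hj1] at h5
    push_cast
    omega

def insertFix (t : ℕ+) (σ : IncM) : IncM := ⟨insFun t σ, insFun_mem t σ⟩

lemma insertFix_fixes (t : ℕ+) (σ : IncM) (j : ℕ+) (hj : j ≤ t) :
    (insertFix t σ).1 j = j := if_pos hj

lemma conj_rel (t : ℕ+) (σ : IncM) (h : ∀ j : ℕ+, j < t → σ.1 j = j) :
    alpha t * σ = insertFix t σ * alpha t := by
  apply incm_ext
  intro j
  rw [mul_apply, mul_apply]
  by_cases hj : j < t
  · rw [h j hj, alpha_apply_lt t j hj, insertFix_fixes t σ j (le_of_lt hj)]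
  · rw [alpha_apply_ge t j hj]
    have h1 : ¬ σ.1 j < t := by
      rw [← PNat.coe_lt_coe] at hj ⊢
      have := le_apply' σ j
      omega
    rw [alpha_apply_ge t (σ.1 j) h1]
    show σ.1 j + 1 = insFun t σ (j + 1)
    have hcond : ¬ (j + 1 : ℕ+) ≤ t := by
      rw [← PNat.coe_lt_coe] at hj
      rw [← PNat.coe_le_coe]
      push_cast
      omega
    unfold insFun
    rw [if_neg hcond, succ_sub_one]

/-- Delete the (non-)fixed point at position `t`, shifting `σ` down. -/
def dropFun (t : ℕ+) (σ : IncM) : Function.End ℕ+ := fun j => if j ≤ t then j else σ.1 (j - 1)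

lemma dropFun_mem (t : ℕ+) (σ : IncM) (ht : t < σ.1 t) : dropFun t σ ∈ IncMonoid := by
  have hmono : StrictMono (dropFun t σ) := by
    intro a b hab
    unfold dropFun
    rw [← PNat.coe_lt_coe] at hab
    split_ifs with h1 h2 h2
    · rwa [← PNat.coe_lt_coe]
    · have h3 : σ.1 t ≤ σ.1 (b - 1) := by
        apply (σ.strictMono.le_iff_le).2
        rw [← PNat.coe_le_coe, sub_one_coe h2]
        rw [← PNat.coe_le_coe] at h2
        omega
      rw [← PNat.coe_lt_coe] at ht ⊢
      rw [← PNat.coe_le_coe] at h3 h1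
      omega
    · exfalso
      rw [← PNat.coe_le_coe] at h1 h2
      omega
    · apply σ.strictMono
      rw [← PNat.coe_lt_coe, sub_one_coe h1, sub_one_coe h2]
      rw [← PNat.coe_le_coe] at h1 h2
      omega
  refine ⟨hmono, ?_⟩
  obtain ⟨l, N, hN⟩ := σ.2.2
  have hl : 1 ≤ l := by
    have hle : N ≤ N + t := by rw [← PNat.coe_le_coe]; push_cast; have := t.pos; omega
    have h1 := hN (N + t) hle
    have h2 : (σ.1 t : ℕ) + (N : ℕ) ≤ (σ.1 (N + t) : ℕ) :=
      gap σ (N : ℕ) t (N + t) (by push_cast; ring)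
    have h3 : (t : ℕ) < (σ.1 t : ℕ) := by rw [PNat.coe_lt_coe]; exact ht
    have h4 : ((N + t : ℕ+) : ℕ) = (N : ℕ) + (t : ℕ) := by push_cast; ring
    rw [h4] at h1
    have := N.pos
    omega
  refine ⟨l - 1, N + t + 1, fun j hj => ?_⟩
  rw [← PNat.coe_le_coe] at hj
  push_cast at hj
  have ht' := t.pos
  have hNp := N.pos
  show ((dropFun t σ j : ℕ+) : ℕ) = (j : ℕ) + (l - 1)
  unfold dropFun
  rw [if_neg (by rw [← PNat.coe_le_coe]; omega)]
  have hj1 : ((j - 1 : ℕ+) : ℕ) = (j : ℕ) - 1 :=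
    sub_one_coe (t := t) (by rw [← PNat.coe_le_coe]; omega)
  have h5 := hN (j - 1) (by rw [← PNat.coe_le_coe, hj1]; omega)
  rw [hj1] at h5
  omega

def dropAt (t : ℕ+) (σ : IncM) (ht : t < σ.1 t) : IncM := ⟨dropFun t σ, dropFun_mem t σ ht⟩

lemma dropAt_fixes (t : ℕ+) (σ : IncM) (ht : t < σ.1 t) (j : ℕ+) (hj : j ≤ t) :
    (dropAt t σ ht).1 j = j := if_pos hj

lemma drop_rel (t : ℕ+) (σ : IncM) (ht : t < σ.1 t) (h : ∀ j : ℕ+, j < t → σ.1 j = j) :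
    σ = dropAt t σ ht * alpha t := by
  apply incm_ext
  intro j
  rw [mul_apply]
  by_cases hj : j < t
  · rw [alpha_apply_lt t j hj, dropAt_fixes t σ ht j (le_of_lt hj), h j hj]
  · rw [alpha_apply_ge t j hj]
    show σ.1 j = dropFun t σ (j + 1)
    have hcond : ¬ (j + 1 : ℕ+) ≤ t := by
      rw [← PNat.coe_lt_coe] at hj
      rw [← PNat.coe_le_coe]
      push_cast
      omega
    unfold dropFun
    rw [if_neg hcond, succ_sub_one]

lemma dropAt_apply_gt (t : ℕ+) (σ : IncM) (ht : t < σ.1 t) (j : ℕ+) (hj : ¬ j ≤ t) :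
    (dropAt t σ ht).1 j = σ.1 (j - 1) := if_neg hj

end Ext12
namespace Ext12

lemma fixesNat_zero' (σ : IncM) : fixesNat σ 0 := fun h => absurd h (lt_irrefl 0)

lemma fixesNat_one' (j : ℕ) : fixesNat (1 : IncM) j := fun _ => rfl

lemma fixes_iff (σ : IncM) (p : ℕ+) : fixesNat σ (p : ℕ) ↔ σ.1 p = p := by
  have hp : (⟨(p : ℕ), p.pos⟩ : ℕ+) = p := Subtype.ext rfl
  constructor
  · intro h
    have := h p.pos
    rwa [hp] at this
  · intro h h0
    have hq : (⟨(p : ℕ), h0⟩ : ℕ+) = p := Subtype.ext rfl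
    rw [hq]
    exact h

/-- The character of `B^j` with values in `k`. -/
def chi (k : Type*) [Field k] (j : ℕ) (σ : IncM) : k := if fixesNat σ j then 1 else 0

variable {k : Type*} [Field k]

lemma chi_one_of {j : ℕ} {σ : IncM} (h : fixesNat σ j) : chi k j σ = 1 := if_pos h

lemma chi_zero_of {j : ℕ} {σ : IncM} (h : ¬ fixesNat σ j) : chi k j σ = 0 := if_neg h

lemma chi_alpha_one {j : ℕ} {i : ℕ+} (h : j = 0 ∨ j < (i : ℕ)) :
    chi k j (alpha i) = 1 := chi_one_of ((fixesNat_alpha i j).2 h)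

lemma chi_alpha_zero {j : ℕ} {i : ℕ+} (h0 : j ≠ 0) (h : ¬ j < (i : ℕ)) :
    chi k j (alpha i) = 0 :=
  chi_zero_of (fun hf => by rcases (fixesNat_alpha i j).1 hf with h' | h' <;> tauto)

lemma exists_min_moved {σ : IncM} {w : ℕ} (hw : ¬ fixesNat σ w) :
    ∃ j0 : ℕ+, (j0 : ℕ) ≤ w ∧ j0 < σ.1 j0 ∧ (∀ j : ℕ+, j < j0 → σ.1 j = j) := by
  have hpw : ∃ hj : 0 < w, σ.1 ⟨w, hj⟩ ≠ ⟨w, hj⟩ := by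
    by_contra hno
    apply hw
    intro h
    by_contra hne
    exact hno ⟨h, hne⟩
  have hex : ∃ j : ℕ, ∃ hj : 0 < j, σ.1 ⟨j, hj⟩ ≠ ⟨j, hj⟩ := ⟨w, hpw⟩
  obtain ⟨hpos, hne⟩ := Nat.find_spec hex
  refine ⟨⟨Nat.find hex, hpos⟩, Nat.find_min' hex hpw,
    lt_of_le_of_ne (σ.le_apply _) (Ne.symm hne), ?_⟩
  intro j hj
  have hjlt : (j : ℕ) < Nat.find hex := by exact (PNat.coe_lt_coe _ _).2 hj
  have hmin := Nat.find_min hex hjlt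
  by_contra hne2
  apply hmin
  have hjj : (⟨(j : ℕ), j.pos⟩ : ℕ+) = j := Subtype.ext rfl
  exact ⟨j.pos, by rw [hjj]; exact hne2⟩

section CaseA

variable {n m : ℕ} (hmn : m < n) (c : IncM → k)
variable (hc : ∀ σ τ : IncM, c (σ * τ) = chi k n τ * c σ + chi k m σ * c τ)

include hmn hc

/-- Case A: `c (alpha j) = 0` for `j ≤ m`. -/
lemma calphaA (j : ℕ+) (hj : (j : ℕ) ≤ m) : c (alpha j) = 0 := by
  have hm0 : 0 < m := lt_of_lt_of_le j.pos hj
  set M : ℕ+ := ⟨m, hm0⟩ with hM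
  have hrel : alpha j * alpha M = alpha (M + 1) * alpha j :=
    alpha_rel (by rw [← PNat.coe_le_coe]; exact hj)
  have h1 := hc (alpha j) (alpha M)
  have h2 := hc (alpha (M + 1)) (alpha j)
  rw [hrel] at h1
  have hM1 : ((M + 1 : ℕ+) : ℕ) = m + 1 := by push_cast; rfl
  have e1 : chi k n (alpha M) = 0 := chi_alpha_zero (by omega) (by simp [hM]; omega)
  have e2 : chi k m (alpha j) = 0 := chi_alpha_zero (by omega) (by omega)
  have e3 : chi k n (alpha j) = 0 := chi_alpha_zero (by omega) (by omega)
  have e4 : chi k m (alpha (M + 1)) = 1 := chi_alpha_one (by rw [hM1]; omega)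
  rw [h2, e1, e2, e3, e4] at h1
  linear_combination h1

/-- Case A: value of `c` on elements fixing `m`. -/
lemma cfixA {σ : IncM} (hσ : fixesNat σ m) :
    c σ = (1 - chi k n σ) * c (alpha ⟨m + 1, Nat.succ_pos m⟩) := by
  set m1 : ℕ+ := ⟨m + 1, Nat.succ_pos m⟩ with hm1def
  have hfix : ∀ j : ℕ+, j < m1 → σ.1 j = j := by
    intro j hj
    rw [← PNat.coe_lt_coe] at hj
    have hj' : (j : ℕ) ≤ m := by simpa [hm1def] using Nat.lt_succ_iff.1 hj
    exact (fixes_iff σ j).1 (fixesNat_mono hj' hσ)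
  have hrel := conj_rel m1 σ hfix
  have h1 := hc (alpha m1) σ
  have h2 := hc (insertFix m1 σ) (alpha m1)
  rw [hrel] at h1
  have e1 : chi k m (alpha m1) = 1 := chi_alpha_one (by right; simp [hm1def])
  have e2 : chi k n (alpha m1) = 0 := chi_alpha_zero (by omega) (by simp [hm1def]; omega)
  have e3 : chi k m (insertFix m1 σ) = 1 := by
    apply chi_one_of
    rcases Nat.eq_zero_or_pos m with h0 | h0
    · rw [h0]; exact fixesNat_zero' _
    · have h4 : fixesNat (insertFix m1 σ) ((⟨m, h0⟩ : ℕ+) : ℕ) :=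
        (fixes_iff _ _).2 (insertFix_fixes m1 σ ⟨m, h0⟩
          (by apply (PNat.coe_le_coe _ _).1; show m ≤ m + 1; omega))
      exact h4
  rw [h2, e1, e2, e3] at h1
  linear_combination -h1

/-- Case A: `c` vanishes on elements not fixing `m`. -/
lemma cnofixA {σ : IncM} (hσ : ¬ fixesNat σ m) : c σ = 0 := by
  obtain ⟨j0, hj0m, ht, hfixlt⟩ := exists_min_moved hσ
  have hrel := drop_rel j0 σ ht hfixlt
  have h1 := hc (dropAt j0 σ ht) (alpha j0)
  rw [← hrel] at h1
  have e1 : chi k n (alpha j0) = 0 := chi_alpha_zero (by omega) (by omega)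
  have e2 : c (alpha j0) = 0 := calphaA hmn c hc j0 hj0m
  rw [e1, e2] at h1
  linear_combination h1

lemma caseA : ∃ lam : k, ∀ σ : IncM, c σ = lam * (chi k n σ - chi k m σ) := by
  refine ⟨- c (alpha ⟨m + 1, Nat.succ_pos m⟩), fun σ => ?_⟩
  by_cases hσ : fixesNat σ m
  · rw [cfixA hmn c hc hσ, chi_one_of hσ]
    ring
  · have hn : ¬ fixesNat σ n := fun h => hσ (fixesNat_mono (le_of_lt hmn) h)
    rw [cnofixA hmn c hc hσ, chi_zero_of hσ, chi_zero_of hn]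
    ring

end CaseA

end Ext12
namespace Ext12

section CaseB

variable {k : Type*} [Field k]
variable {n m : ℕ} (hmn : n + 2 ≤ m) (c : IncM → k)
variable (hc : ∀ σ τ : IncM, c (σ * τ) = chi k n τ * c σ + chi k m σ * c τ)

include hmn hc

lemma calphaB_low (j : ℕ+) (hj : (j : ℕ) ≤ n) : c (alpha j) = 0 := by
  set n1 : ℕ+ := ⟨n + 1, Nat.succ_pos n⟩ with hn1
  have hrel : alpha j * alpha n1 = alpha (n1 + 1) * alpha j :=
    alpha_rel (by rw [← PNat.coe_le_coe]; show (j : ℕ) ≤ n + 1; omega)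
  have h1 := hc (alpha j) (alpha n1)
  have h2 := hc (alpha (n1 + 1)) (alpha j)
  rw [hrel, h2] at h1
  have hco : ((n1 + 1 : ℕ+) : ℕ) = n + 2 := by rw [hn1]; push_cast; rfl
  have hjpos := j.pos
  have e1 : chi k n (alpha n1) = 1 := chi_alpha_one (by right; show n < n + 1; omega)
  have e2 : chi k m (alpha j) = 0 := chi_alpha_zero (by omega) (by omega)
  have e3 : chi k n (alpha j) = 0 := chi_alpha_zero (by omega) (by omega)
  have e4 : chi k m (alpha (n1 + 1)) = 0 := chi_alpha_zero (by omega) (by rw [hco]; omega)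
  rw [e1, e2, e3, e4] at h1
  linear_combination -h1

/-- The key exchange identity used for `c` on generators above `n`. -/
lemma calphaB_key (i : ℕ+) (hi : n + 1 ≤ (i : ℕ)) :
    c (alpha (i + 1)) + chi k m (alpha (i + 1)) * c (alpha ⟨n + 1, Nat.succ_pos n⟩)
      = c (alpha ⟨n + 1, Nat.succ_pos n⟩) := by
  set n1 : ℕ+ := ⟨n + 1, Nat.succ_pos n⟩ with hn1
  have hrel : alpha n1 * alpha i = alpha (i + 1) * alpha n1 :=
    alpha_rel (by rw [← PNat.coe_le_coe]; show n + 1 ≤ (i : ℕ); omega)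
  have h1 := hc (alpha n1) (alpha i)
  have h2 := hc (alpha (i + 1)) (alpha n1)
  rw [hrel, h2] at h1
  have e1 : chi k n (alpha i) = 1 := chi_alpha_one (by right; omega)
  have e2 : chi k m (alpha n1) = 0 := chi_alpha_zero (by omega) (by show ¬ m < n + 1; omega)
  have e3 : chi k n (alpha n1) = 1 := chi_alpha_one (by right; show n < n + 1; omega)
  rw [e1, e2, e3] at h1
  linear_combination h1

lemma calphaB_mid (j : ℕ+) (hj1 : n + 1 ≤ (j : ℕ)) (hj2 : (j : ℕ) ≤ m) :
    c (alpha j) = c (alpha ⟨n + 1, Nat.succ_pos n⟩) := by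
  rcases eq_or_lt_of_le hj1 with heq | hlt
  · have : j = ⟨n + 1, Nat.succ_pos n⟩ := PNat.coe_injective (by show (j : ℕ) = n + 1; omega)
    rw [this]
  · have hipos : 0 < (j : ℕ) - 1 := by omega
    set i : ℕ+ := ⟨(j : ℕ) - 1, hipos⟩ with hidef
    have hij : i + 1 = j := PNat.coe_injective (by push_cast; rw [hidef]; simp; omega)
    have hkey := calphaB_key hmn c hc i (by rw [hidef]; simp; omega)
    rw [hij] at hkey
    have e1 : chi k m (alpha j) = 0 := chi_alpha_zero (by omega) (by omega)
    rw [e1] at hkey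
    linear_combination hkey

lemma calphaB_high (j : ℕ+) (hj : m + 1 ≤ (j : ℕ)) : c (alpha j) = 0 := by
  have hhigh2 : ∀ jj : ℕ+, m + 2 ≤ (jj : ℕ) → c (alpha jj) = 0 := by
    intro jj hjj
    have hipos : 0 < (jj : ℕ) - 1 := by omega
    set i : ℕ+ := ⟨(jj : ℕ) - 1, hipos⟩ with hidef
    have hij : i + 1 = jj := PNat.coe_injective (by push_cast; rw [hidef]; simp; omega)
    have hkey := calphaB_key hmn c hc i (by rw [hidef]; simp; omega)
    rw [hij] at hkey
    have e1 : chi k m (alpha jj) = 1 := chi_alpha_one (by right; omega)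
    rw [e1] at hkey
    linear_combination hkey
  rcases eq_or_lt_of_le hj with heq | hlt
  · -- j = m + 1
    have hrel : alpha j * alpha j = alpha (j + 1) * alpha j := alpha_rel le_rfl
    have h1 := hc (alpha j) (alpha j)
    have h2 := hc (alpha (j + 1)) (alpha j)
    rw [hrel, h2] at h1
    have hco : ((j + 1 : ℕ+) : ℕ) = m + 2 := by push_cast; omega
    have e1 : chi k n (alpha j) = 1 := chi_alpha_one (by right; omega)
    have e2 : chi k m (alpha j) = 1 := chi_alpha_one (by right; omega)
    have e3 : chi k m (alpha (j + 1)) = 1 := chi_alpha_one (by right; rw [hco]; omega)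
    have e4 : c (alpha (j + 1)) = 0 := hhigh2 (j + 1) (by rw [hco])
    rw [e1, e2, e3, e4] at h1
    linear_combination -h1
  · exact hhigh2 j (by omega)

lemma cnofixB {σ : IncM} (hσ : ¬ fixesNat σ n) : c σ = 0 := by
  have hn0 : n ≠ 0 := fun h => hσ (h ▸ fixesNat_zero' σ)
  obtain ⟨j0, hj0n, ht, hfixlt⟩ := exists_min_moved hσ
  have hrel := drop_rel j0 σ ht hfixlt
  have h1 := hc (dropAt j0 σ ht) (alpha j0)
  rw [← hrel] at h1
  have e1 : chi k n (alpha j0) = 0 := chi_alpha_zero hn0 (by omega)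
  have e2 : c (alpha j0) = 0 := calphaB_low hmn c hc j0 hj0n
  rw [e1, e2] at h1
  linear_combination h1

lemma cfixB {σ : IncM} (hσ : fixesNat σ n) :
    c σ = (1 - chi k m σ) * c (alpha ⟨n + 1, Nat.succ_pos n⟩) := by
  suffices h : ∀ (L : ℕ) (σ : IncM) (N : ℕ+),
      (∀ j : ℕ+, N ≤ j → (σ.1 j : ℕ) = (j : ℕ) + L) → fixesNat σ n →
      c σ = (1 - chi k m σ) * c (alpha ⟨n + 1, Nat.succ_pos n⟩) by
    obtain ⟨l, N, hN⟩ := σ.2.2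
    exact h l σ N hN hσ
  intro L
  induction L with
  | zero =>
      intro σ N hN hfix
      have hid : σ = 1 := by
        apply incm_ext
        intro j
        have h1 : σ.1 (N + j) = N + j := by
          apply PNat.coe_injective
          rw [hN (N + j) (by rw [← PNat.coe_le_coe]; push_cast; have := j.pos; omega)]
          omega
        exact fix_below σ
          (by rw [← PNat.coe_le_coe]; push_cast; have := N.pos; omega : j ≤ N + j) h1
      have hc1 : c (1 : IncM) = 0 := by
        have h2 := hc 1 1
        rw [mul_one, chi_one_of (fixesNat_one' n), chi_one_of (fixesNat_one' m)] at h2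
        linear_combination -h2
      rw [hid, hc1, chi_one_of (fixesNat_one' m)]
      ring
  | succ L ih =>
      intro σ N hN hfix
      have hmoveN : σ.1 N ≠ N := by
        intro h
        have h3 := hN N le_rfl
        rw [h] at h3
        omega
      have hnofix : ¬ fixesNat σ (N : ℕ) := fun h => hmoveN ((fixes_iff σ N).1 h)
      obtain ⟨j0, hj0N, ht, hfixlt⟩ := exists_min_moved hnofix
      have hj0n : n < (j0 : ℕ) := by
        by_contra hle
        have h4 := fixesNat_mono (le_of_not_gt hle) hfix
        exact absurd ((fixes_iff σ j0).1 h4) (ne_of_gt ht)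
      have hrel := drop_rel j0 σ ht hfixlt
      have hshift2 : ∀ j : ℕ+, N + j0 + 1 ≤ j → ((dropAt j0 σ ht).1 j : ℕ) = (j : ℕ) + L := by
        intro j hj
        rw [← PNat.coe_le_coe] at hj
        push_cast at hj
        have hNp := N.pos
        have hj0p := j0.pos
        have hgt : ¬ j ≤ j0 := by rw [← PNat.coe_le_coe]; omega
        rw [dropAt_apply_gt j0 σ ht j hgt]
        have hsub : ((j - 1 : ℕ+) : ℕ) = (j : ℕ) - 1 := sub_one_coe (t := j0) hgt
        have h5 := hN (j - 1) (by rw [← PNat.coe_le_coe, hsub]; omega)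
        rw [hsub] at h5
        omega
      have hfix2 : fixesNat (dropAt j0 σ ht) n := by
        rcases Nat.eq_zero_or_pos n with h0 | h0
        · rw [h0]; exact fixesNat_zero' _
        · have h4 : fixesNat (dropAt j0 σ ht) ((⟨n, h0⟩ : ℕ+) : ℕ) := (fixes_iff _ _).2
            (dropAt_fixes j0 σ ht ⟨n, h0⟩ (by apply (PNat.coe_le_coe _ _).1; show n ≤ (j0 : ℕ); omega))
          exact h4
      have ihv := ih (dropAt j0 σ ht) (N + j0 + 1) hshift2 hfix2
      have h1 := hc (dropAt j0 σ ht) (alpha j0)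
      rw [← hrel] at h1
      have e1 : chi k n (alpha j0) = 1 := chi_alpha_one (by right; exact hj0n)
      rw [e1, ihv] at h1
      have hm0 : 0 < m := by omega
      by_cases hj0m : (j0 : ℕ) ≤ m
      · have e2 : c (alpha j0) = c (alpha ⟨n + 1, Nat.succ_pos n⟩) :=
          calphaB_mid hmn c hc j0 (by omega) hj0m
        have e3 : chi k m σ = 0 := by
          apply chi_zero_of
          intro hfm
          have h4 := fixesNat_mono hj0m hfm
          exact absurd ((fixes_iff σ j0).1 h4) (ne_of_gt ht)
        rw [e2] at h1
        rw [e3, h1]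
        ring
      · have e2 : c (alpha j0) = 0 := calphaB_high hmn c hc j0 (by omega)
        have e3 : chi k m σ = 1 := chi_one_of (by
          have h4 : fixesNat σ ((⟨m, hm0⟩ : ℕ+) : ℕ) := (fixes_iff _ _).2
            (hfixlt ⟨m, hm0⟩ (by apply (PNat.coe_lt_coe _ _).1; show m < (j0 : ℕ); omega))
          exact h4)
        have e4 : chi k m (dropAt j0 σ ht) = 1 := chi_one_of (by
          have h4 : fixesNat (dropAt j0 σ ht) ((⟨m, hm0⟩ : ℕ+) : ℕ) := (fixes_iff _ _).2
            (dropAt_fixes j0 σ ht ⟨m, hm0⟩ (by apply (PNat.coe_le_coe _ _).1; show m ≤ (j0 : ℕ); omega))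
          exact h4)
        rw [e2, e4] at h1
        rw [e3, h1]
        ring

lemma caseB : ∃ lam : k, ∀ σ : IncM, c σ = lam * (chi k n σ - chi k m σ) := by
  refine ⟨c (alpha ⟨n + 1, Nat.succ_pos n⟩), fun σ => ?_⟩
  by_cases hσ : fixesNat σ n
  · rw [cfixB hmn c hc hσ, chi_one_of hσ]
    ring
  · have hm : ¬ fixesNat σ m := fun h => hσ (fixesNat_mono (by omega) h)
    rw [cnofixB hmn c hc hσ, chi_zero_of hσ, chi_zero_of hm]
    ring

end CaseB

theorem cocycle_solve {k : Type*} [Field k] (n m : ℕ) (hm1 : m ≠ n) (hm2 : m ≠ n + 1)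
    (c : IncM → k)
    (hc : ∀ σ τ : IncM, c (σ * τ) = chi k n τ * c σ + chi k m σ * c τ) :
    ∃ lam : k, ∀ σ : IncM, c σ = lam * (chi k n σ - chi k m σ) := by
  rcases lt_or_ge m n with h | h
  · exact caseA h c hc
  · exact caseB (by omega) c hc

end Ext12
namespace Ext12

section Modules

variable {k : Type*} [Field k]

lemma algebraMap_eq_single (r : k) :
    algebraMap k (IncAlg k) r = MonoidAlgebra.single (1 : IncM) r := by
  rw [show algebraMap k (IncAlg k) r = (algebraMap k (IncAlg k) : k → IncAlg k) r from rfl,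
    MonoidAlgebra.coe_algebraMap]
  simp

lemma bmod_rho_apply (j : ℕ) (σ : IncM) (v : k) :
    (bRep k j) σ v = chi k j σ * v := by
  show (if fixesNat σ j then (1 : k →ₗ[k] k) else 0) v = chi k j σ * v
  unfold chi
  split_ifs with h
  · simp
  · simp

lemma bmod_of_smul (j : ℕ) (σ : IncM) (x : BMod k j) :
    ofInc k σ • x = algebraMap k (IncAlg k) (chi k j σ) • x := by
  apply (bRep k j).asModuleEquiv.injective
  rw [Representation.asModuleEquiv_map_smul, Representation.asModuleEquiv_map_smul]
  rw [algebraMap_eq_single]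
  rw [show (ofInc k σ : IncAlg k) = MonoidAlgebra.single σ (1 : k) from rfl]
  rw [Representation.asAlgebraHom_single, Representation.asAlgebraHom_single]
  rw [LinearMap.smul_apply, LinearMap.smul_apply, bmod_rho_apply, map_one]
  simp [Module.End.one_apply, smul_eq_mul]

/-- The canonical generator of `B^j`. -/
def bgen (j : ℕ) : BMod k j := (bRep k j).asModuleEquiv.symm 1

lemma bmod_alg_smul (j : ℕ) (r : k) (x : BMod k j) :
    algebraMap k (IncAlg k) r • x =
      (bRep k j).asModuleEquiv.symm (r • (bRep k j).asModuleEquiv x) := by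
  rw [Representation.asModuleEquiv_symm_map_smul, LinearEquiv.symm_apply_apply]

lemma bmod_eq_smul (j : ℕ) (x : BMod k j) :
    x = algebraMap k (IncAlg k) ((bRep k j).asModuleEquiv x) • (bgen j) := by
  rw [bmod_alg_smul]
  unfold bgen
  rw [LinearEquiv.apply_symm_apply, smul_eq_mul, mul_one, LinearEquiv.symm_apply_apply]

lemma bmod_smul_inj (j : ℕ) (r : k) (h : algebraMap k (IncAlg k) r • (bgen j : BMod k j) = 0) :
    r = 0 := by
  rw [bmod_alg_smul] at h
  unfold bgen at h
  rw [LinearEquiv.apply_symm_apply, smul_eq_mul, mul_one] at h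
  have := congrArg (bRep k j).asModuleEquiv h
  rwa [LinearEquiv.apply_symm_apply, map_zero] at this

end Modules

end Ext12
namespace Ext12

theorem main (k : Type*) [Field k] (n m : ℕ)
    (hm1 : m ≠ n) (hm2 : m ≠ n + 1)
    (E : Type*) [AddCommGroup E] [Module (IncAlg k) E]
    (N : Submodule (IncAlg k) E)
    (h1 : Nonempty (N ≃ₗ[IncAlg k] BMod k m))
    (h2 : Nonempty ((E ⧸ N) ≃ₗ[IncAlg k] BMod k n)) :
    ∃ C : Submodule (IncAlg k) E, IsCompl N C := by
  obtain ⟨φ⟩ := h1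
  obtain ⟨ψ⟩ := h2
  set fN : N := φ.symm (bgen m) with hfN
  -- scalar-multiplication combination lemmas
  have hcomm : ∀ (a : IncAlg k) (r : k) (x : E),
      a • (algebraMap k (IncAlg k) r • x) = algebraMap k (IncAlg k) r • (a • x) := by
    intro a r x
    rw [smul_smul, smul_smul, Algebra.commutes]
  have hmul : ∀ (r s : k) (x : E),
      algebraMap k (IncAlg k) r • (algebraMap k (IncAlg k) s • x)
        = algebraMap k (IncAlg k) (r * s) • x := by
    intro r s x
    rw [smul_smul, ← map_mul]
  -- facts about the generator of N
  have hf_smul : ∀ σ : IncM, ofInc k σ • (fN : E) =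
      algebraMap k (IncAlg k) (chi k m σ) • (fN : E) := by
    intro σ
    have h3 : ofInc k σ • fN = algebraMap k (IncAlg k) (chi k m σ) • fN := by
      apply φ.injective
      rw [map_smul, map_smul, hfN, φ.apply_symm_apply]
      exact bmod_of_smul m σ _
    have := congrArg (fun x : N => (x : E)) h3
    simpa using this
  have hf_coord : ∀ x : N, ∃ r : k, (x : E) = algebraMap k (IncAlg k) r • (fN : E) := by
    intro x
    refine ⟨(bRep k m).asModuleEquiv (φ x), ?_⟩
    have h3 : x = algebraMap k (IncAlg k) ((bRep k m).asModuleEquiv (φ x)) • fN := by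
      apply φ.injective
      rw [map_smul, hfN, φ.apply_symm_apply]
      exact bmod_eq_smul m (φ x)
    have := congrArg (fun x : N => (x : E)) h3
    simpa using this
  have hf_inj : ∀ r : k, algebraMap k (IncAlg k) r • (fN : E) = 0 → r = 0 := by
    intro r hr
    have h3 : algebraMap k (IncAlg k) r • fN = 0 := by
      apply Subtype.coe_injective
      simpa using hr
    have h4 := congrArg φ h3
    rw [map_smul, map_zero, hfN, φ.apply_symm_apply] at h4
    exact bmod_smul_inj m r h4
  -- facts about the quotient
  set bq : E ⧸ N := ψ.symm (bgen n) with hbq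
  obtain ⟨e, he⟩ := Submodule.Quotient.mk_surjective N bq
  have he' : N.mkQ e = bq := by rw [Submodule.mkQ_apply]; exact he
  have hq_smul : ∀ σ : IncM, ofInc k σ • bq = algebraMap k (IncAlg k) (chi k n σ) • bq := by
    intro σ
    apply ψ.injective
    rw [map_smul, map_smul, hbq, ψ.apply_symm_apply]
    exact bmod_of_smul n σ _
  have hq_inj : ∀ r : k, algebraMap k (IncAlg k) r • bq = 0 → r = 0 := by
    intro r hr
    have h4 := congrArg ψ hr
    rw [map_smul, map_zero, hbq, ψ.apply_symm_apply] at h4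
    exact bmod_smul_inj n r h4
  have hq_coord : ∀ y : E ⧸ N, ∃ r : k, y = algebraMap k (IncAlg k) r • bq := by
    intro y
    refine ⟨(bRep k n).asModuleEquiv (ψ y), ?_⟩
    apply ψ.injective
    rw [map_smul, hbq, ψ.apply_symm_apply]
    exact bmod_eq_smul n (ψ y)
  have hfN0 : N.mkQ (fN : E) = 0 := by
    rw [Submodule.mkQ_apply, Submodule.Quotient.mk_eq_zero]
    exact fN.2
  -- uniqueness of coordinates
  have huniq : ∀ a b a' b' : k,
      algebraMap k (IncAlg k) a • e + algebraMap k (IncAlg k) b • (fN : E) =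
        algebraMap k (IncAlg k) a' • e + algebraMap k (IncAlg k) b' • (fN : E) →
      a = a' ∧ b = b' := by
    intro a b a' b' hEq
    have h3 := congrArg N.mkQ hEq
    rw [map_add, map_add, map_smul, map_smul, map_smul, map_smul, hfN0, smul_zero, smul_zero,
      he', add_zero, add_zero] at h3
    have ha : a = a' := by
      have h4 : algebraMap k (IncAlg k) (a - a') • bq = 0 := by
        rw [map_sub, sub_smul, h3, sub_self]
      exact sub_eq_zero.1 (hq_inj _ h4)
    refine ⟨ha, ?_⟩
    rw [ha] at hEq
    have h5 := add_left_cancel hEq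
    have h6 : algebraMap k (IncAlg k) (b - b') • (fN : E) = 0 := by
      rw [map_sub, sub_smul, h5, sub_self]
    exact sub_eq_zero.1 (hf_inj _ h6)
  -- the cocycle
  have hd0 : ∀ σ : IncM, ∃ r : k, ofInc k σ • e =
      algebraMap k (IncAlg k) (chi k n σ) • e + algebraMap k (IncAlg k) r • (fN : E) := by
    intro σ
    have hmem : ofInc k σ • e - algebraMap k (IncAlg k) (chi k n σ) • e ∈ N := by
      rw [← Submodule.Quotient.mk_eq_zero N, ← Submodule.mkQ_apply, map_sub, map_smul, map_smul,
        he', hq_smul σ]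
      simp
    obtain ⟨r, hr⟩ := hf_coord ⟨_, hmem⟩
    refine ⟨r, ?_⟩
    rw [show ((⟨_, hmem⟩ : N) : E)
      = ofInc k σ • e - algebraMap k (IncAlg k) (chi k n σ) • e from rfl] at hr
    exact sub_eq_iff_eq_add'.1 hr
  choose d hd using hd0
  have hcoc : ∀ σ τ : IncM, d (σ * τ) = chi k n τ * d σ + chi k m σ * d τ := by
    intro σ τ
    have E1 := hd (σ * τ)
    have E2 : ofInc k (σ * τ) • e
        = algebraMap k (IncAlg k) (chi k n τ * chi k n σ) • e
          + algebraMap k (IncAlg k) (chi k n τ * d σ + d τ * chi k m σ) • (fN : E) := by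
      have hofmul : (ofInc k (σ * τ) : IncAlg k) = ofInc k σ * ofInc k τ :=
        map_mul (MonoidAlgebra.of k IncM) σ τ
      rw [hofmul, mul_smul, hd τ, smul_add, hcomm, hcomm, hd σ, hf_smul σ, smul_add,
        hmul, hmul, hmul, add_assoc, ← add_smul, ← map_add]
    have E3 := E1.symm.trans E2
    have H := huniq _ _ _ _ E3
    rw [H.2]
    ring
  obtain ⟨lam, hlam⟩ := cocycle_solve n m hm1 hm2 d hcoc
  set v : E := e + algebraMap k (IncAlg k) lam • (fN : E) with hvdef
  have hv : ∀ σ : IncM, ofInc k σ • v = algebraMap k (IncAlg k) (chi k n σ) • v := by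
    intro σ
    have h3 : ofInc k σ • v
        = algebraMap k (IncAlg k) (chi k n σ) • e
          + algebraMap k (IncAlg k) (d σ + lam * chi k m σ) • (fN : E) := by
      rw [hvdef, smul_add, hd σ, hcomm, hf_smul σ, hmul, add_assoc, ← add_smul, ← map_add]
    have h4 : d σ + lam * chi k m σ = chi k n σ * lam := by
      rw [hlam σ]; ring
    have h5 : algebraMap k (IncAlg k) (chi k n σ) • v
        = algebraMap k (IncAlg k) (chi k n σ) • e
          + algebraMap k (IncAlg k) (chi k n σ * lam) • (fN : E) := by
      rw [hvdef, smul_add, hmul]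
    rw [h3, h4, h5]
  have hv_all : ∀ a : IncAlg k, ∃ r : k, a • v = algebraMap k (IncAlg k) r • v := by
    intro a
    induction a using MonoidAlgebra.induction_on with
    | of g => exact ⟨chi k n g, hv g⟩
    | add f g hf hg =>
        obtain ⟨r, hr⟩ := hf
        obtain ⟨s, hs⟩ := hg
        exact ⟨r + s, by rw [add_smul, hr, hs, map_add, add_smul]⟩
    | smul r f hf =>
        obtain ⟨s, hs⟩ := hf
        refine ⟨r * s, ?_⟩
        rw [Algebra.smul_def, mul_smul, hs, hmul]
  have hmkv : N.mkQ v = bq := by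
    rw [hvdef, map_add, map_smul, hfN0, smul_zero, add_zero, he']
  refine ⟨Submodule.span (IncAlg k) {v}, ?_, ?_⟩
  · -- disjoint
    rw [Submodule.disjoint_def]
    intro x hxN hxC
    obtain ⟨a, ha⟩ := Submodule.mem_span_singleton.1 hxC
    obtain ⟨r, hr⟩ := hv_all a
    have hx : x = algebraMap k (IncAlg k) r • v := by rw [← ha, hr]
    have h3 : algebraMap k (IncAlg k) r • bq = 0 := by
      have h4 : N.mkQ x = 0 := by
        rw [Submodule.mkQ_apply, Submodule.Quotient.mk_eq_zero]
        exact hxN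
      rw [← hmkv, ← map_smul, ← hx, h4]
    have hr0 : r = 0 := hq_inj r h3
    rw [hx, hr0, map_zero, zero_smul]
  · -- codisjoint
    rw [codisjoint_iff, Submodule.eq_top_iff']
    intro x
    obtain ⟨r, hr⟩ := hq_coord (N.mkQ x)
    have hmem : x - algebraMap k (IncAlg k) r • v ∈ N := by
      rw [← Submodule.Quotient.mk_eq_zero N, ← Submodule.mkQ_apply, map_sub, map_smul, hmkv,
        ← hr, sub_self]
    have hsplit : x = (x - algebraMap k (IncAlg k) r • v) + algebraMap k (IncAlg k) r • v := by
      abel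
    rw [hsplit]
    exact Submodule.add_mem _ (Submodule.mem_sup_left hmem)
      (Submodule.mem_sup_right (Submodule.smul_mem _ _ (Submodule.mem_span_singleton_self v)))

end Ext12
/-- For `m ∉ {n, n+1}`, every extension of `B^n` by `B^m` splits:
if a `k[I]`-module `E` has a submodule `N ≅ B^m` with `E/N ≅ B^n`, then `N` is a
direct summand of `E`. -/
theorem extension_of_simples_splits (k : Type*) [Field k] (n m : ℕ)
    (hm1 : m ≠ n) (hm2 : m ≠ n + 1)
    (E : Type*) [AddCommGroup E] [Module (IncAlg k) E]
    (N : Submodule (IncAlg k) E)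
    (h1 : Nonempty (N ≃ₗ[IncAlg k] BMod k m))
    (h2 : Nonempty ((E ⧸ N) ≃ₗ[IncAlg k] BMod k n)) :
    ∃ C : Submodule (IncAlg k) E, IsCompl N C :=
  Ext12.main k n m hm1 hm2 E N h1 h2

end
end

section
/- Fix a field k and let M be a smooth k[I]-module that is locally of finite length (equivalently, every cyclic k[I]-submodule of M is finite-dimensional over k). Then for every n ≥ 1, the composition M^{I_{≥n}} → M → M_{I_{≥n}} of the inclusion of invariants with the projection to coinvariants is an isomorphism of k-vector spaces; equivalently, M is the internal direct sum M = M^{I_{≥n}} ⊕ 𝔞_n M. -/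
open scoped Classical

noncomputable section

/-- The set of elements `(σ - 1) · x` of `M` with `σ ∈ I_{≥ n}`, `x ∈ M`. -/
def augSet (k : Type*) (M : Type*) [Field k] [AddCommGroup M] [Module (IncAlg k) M]
    (n : ℕ+) : Set M :=
  {m | ∃ σ ∈ Iges n, ∃ x : M, m = ofInc k σ • x - x}

/-- `𝔞_n M`: the span of the elements `(σ - 1) · x` with `σ ∈ I_{≥ n}`, `x ∈ M`
(since this set of elements is stable under scaling by `k`, its `k`-span coincides
with the additive subgroup it generates). -/
def augGrp (k : Type*) (M : Type*) [Field k] [AddCommGroup M] [Module (IncAlg k) M]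
    (n : ℕ+) : AddSubgroup M :=
  AddSubgroup.closure (augSet k M n)

/-- The set `M^{I_{≥ n}}` of `I_{≥ n}`-invariant vectors of `M`. -/
def invSet (k : Type*) (M : Type*) [Field k] [AddCommMonoid M] [Module (IncAlg k) M]
    (S : Submonoid IncM) : Set M :=
  {x | ∀ σ ∈ S, ofInc k σ • x = x}


/-! ### Auxiliary lemmas -/

lemma IncM.one_apply' (x : ℕ+) : (1 : IncM).1 x = x := rfl

lemma IncM.mul_apply' (σ τ : IncM) (x : ℕ+) : (σ * τ).1 x = σ.1 (τ.1 x) := rfl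

lemma alpha_apply (j x : ℕ+) :
    ((alpha j).1 x : ℕ) = if (x:ℕ) < (j:ℕ) then (x:ℕ) else (x:ℕ) + 1 := by
  show ((alphaFun j x : ℕ)) = _
  unfold alphaFun
  by_cases h : x < j
  · rw [if_pos h, if_pos (by exact_mod_cast h)]
  · rw [if_neg h, if_neg (by exact_mod_cast h)]; push_cast; rfl

lemma alpha_pow_apply (n : ℕ+) (s : ℕ) : ∀ x : ℕ+,
    ((alpha n ^ s).1 x : ℕ) = if (x:ℕ) < (n:ℕ) then (x:ℕ) else (x:ℕ) + s := by
  induction s with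
  | zero =>
      intro x
      rw [pow_zero, IncM.one_apply']
      split_ifs <;> omega
  | succ s ih =>
      intro x
      rw [pow_succ, IncM.mul_apply', ih]
      have ha := alpha_apply n x
      split_ifs at * <;> omega

lemma IncM.ext' {σ τ : IncM} (h : ∀ x : ℕ+, (σ.1 x : ℕ) = (τ.1 x : ℕ)) : σ = τ :=
  Subtype.ext (funext fun x => PNat.coe_injective (h x))

lemma relA (n : ℕ+) (m : ℕ) (hm : (n:ℕ) ≤ m) (j : ℕ+) (hj1 : (n:ℕ) ≤ (j:ℕ))
    (hj2 : (j:ℕ) ≤ m) :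
    alpha j * (alpha n ^ (m + 1 - (n:ℕ))) =
      alpha ⟨m+1, Nat.succ_pos m⟩ * (alpha n ^ (m + 1 - (n:ℕ))) := by
  apply IncM.ext'
  intro x
  rw [IncM.mul_apply', IncM.mul_apply']
  erw [alpha_apply, alpha_apply,
    alpha_pow_apply n (m + 1 - (n:ℕ)) x]
  simp only [PNat.mk_coe]
  split_ifs <;> omega

lemma relB (n : ℕ+) (s : ℕ) (j : ℕ+) (hj : (n:ℕ) ≤ (j:ℕ)) :
    (alpha n ^ s) * alpha j =
      alpha ⟨(j:ℕ)+s, Nat.add_pos_left j.pos s⟩ * (alpha n ^ s) := by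
  apply IncM.ext'
  intro x
  rw [IncM.mul_apply', IncM.mul_apply']
  erw [alpha_apply,
    alpha_pow_apply n s x, alpha_pow_apply n s ((alpha j).1 x)]
  have ha := alpha_apply j x
  simp only [PNat.mk_coe] at *
  split_ifs at * <;> omega

lemma alpha_mem_Iges {n j : ℕ+} (h : n ≤ j) : alpha j ∈ Iges n :=
  Submonoid.subset_closure ⟨j, h, rfl⟩

lemma alpha_mem_Igt {m : ℕ} {j : ℕ+} (h : m < (j:ℕ)) : alpha j ∈ Igt m :=
  Submonoid.subset_closure ⟨j, h, rfl⟩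

lemma Igt_mono {m m' : ℕ} (h : m ≤ m') : Igt m' ≤ Igt m :=
  Submonoid.closure_mono (fun _ ⟨i, hi, hs⟩ => ⟨i, lt_of_le_of_lt h hi, hs⟩)

section ModuleLemmas

variable {k : Type*} [Field k] {M : Type*} [AddCommGroup M] [Module (IncAlg k) M]

lemma ofInc_mul_smul (σ τ : IncM) (x : M) :
    ofInc k (σ * τ) • x = ofInc k σ • ofInc k τ • x := by
  rw [show ofInc k (σ * τ) = ofInc k σ * ofInc k τ from map_mul _ _ _, mul_smul]

lemma ofInc_one_smul (x : M) : ofInc k (1 : IncM) • x = x := by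
  rw [show ofInc k (1:IncM) = 1 from map_one _, one_smul]

lemma uniform_bound (hsm : IsSmoothMod k M)
    (hlf : ∀ x : M, ∃ (m : ℕ) (v : Fin m → M),
      ∀ y ∈ Submodule.span (IncAlg k) ({x} : Set M),
        ∃ c : Fin m → k, y = ∑ i, algebraMap k (IncAlg k) (c i) • v i)
    (x : M) :
    ∃ m : ℕ, ∀ y ∈ Submodule.span (IncAlg k) ({x} : Set M),
      ∀ σ ∈ Igt m, ofInc k σ • y = y := by
  obtain ⟨r, v, hv⟩ := hlf x
  choose b hb using fun i => hsm (v i)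
  refine ⟨Finset.univ.sup b, fun y hy σ hσ => ?_⟩
  obtain ⟨c, hc⟩ := hv y hy
  rw [hc, Finset.smul_sum]
  refine Finset.sum_congr rfl fun i _ => ?_
  rw [← mul_smul, ← Algebra.commutes, mul_smul]
  congr 1
  exact hb i σ (Igt_mono (Finset.le_sup (Finset.mem_univ i)) hσ)

lemma keyA (n : ℕ+) (m : ℕ) (hm : (n:ℕ) ≤ m) (x : M)
    (hfix : ∀ y ∈ Submodule.span (IncAlg k) ({x} : Set M),
      ∀ σ ∈ Igt m, ofInc k σ • y = y)
    {τ : IncM} (hτ : τ ∈ Iges n) :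
    ofInc k τ • (ofInc k (alpha n ^ (m+1-(n:ℕ))) • x)
      = ofInc k (alpha n ^ (m+1-(n:ℕ))) • x := by
  have hsgx : ofInc k (alpha n ^ (m+1-(n:ℕ))) • x ∈
      Submodule.span (IncAlg k) ({x} : Set M) :=
    Submodule.smul_mem _ _ (Submodule.subset_span (Set.mem_singleton x))
  refine Submonoid.closure_induction
    (motive := fun τ _ => ofInc k τ • (ofInc k (alpha n ^ (m+1-(n:ℕ))) • x)
      = ofInc k (alpha n ^ (m+1-(n:ℕ))) • x) ?_ ?_ ?_ hτ
  · rintro _ ⟨j, hj, rfl⟩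
    have hj' : (n:ℕ) ≤ (j:ℕ) := (PNat.coe_le_coe _ _).2 hj
    by_cases hjm : (j:ℕ) ≤ m
    · rw [← ofInc_mul_smul, relA n m hm j hj' hjm, ofInc_mul_smul]
      exact hfix _ hsgx _ (alpha_mem_Igt (show m < ((⟨m+1, Nat.succ_pos m⟩:ℕ+):ℕ) by
        simp only [PNat.mk_coe]; omega))
    · exact hfix _ hsgx _ (alpha_mem_Igt (by omega))
  · exact ofInc_one_smul _
  · intro a b _ _ ha hb
    rw [ofInc_mul_smul, hb, ha]

lemma keyB (n : ℕ+) (m : ℕ) (x : M)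
    (hfix : ∀ y ∈ Submodule.span (IncAlg k) ({x} : Set M),
      ∀ σ ∈ Igt m, ofInc k σ • y = y)
    {τ : IncM} (hτ : τ ∈ Iges n) (s : ℕ) (hs : m < (n:ℕ) + s) :
    ∀ w ∈ Submodule.span (IncAlg k) ({x} : Set M),
      ofInc k (alpha n ^ s) • (ofInc k τ • w) = ofInc k (alpha n ^ s) • w := by
  refine Submonoid.closure_induction
    (motive := fun τ _ => ∀ w ∈ Submodule.span (IncAlg k) ({x} : Set M),
      ofInc k (alpha n ^ s) • (ofInc k τ • w) = ofInc k (alpha n ^ s) • w) ?_ ?_ ?_ hτ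
  · rintro _ ⟨j, hj, rfl⟩ w hw
    have hj' : (n:ℕ) ≤ (j:ℕ) := (PNat.coe_le_coe _ _).2 hj
    rw [← ofInc_mul_smul, relB n s j hj', ofInc_mul_smul]
    refine hfix _ (Submodule.smul_mem _ _ hw) _ (alpha_mem_Igt ?_)
    simp only [PNat.mk_coe]
    omega
  · intro w _; rw [ofInc_one_smul]
  · intro a b _ _ ha hb w hw
    rw [ofInc_mul_smul, ha (ofInc k b • w) (Submodule.smul_mem _ _ hw), hb w hw]

end ModuleLemmas

/-- For a smooth, locally finite length `k[I]`-module `M` and any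
`n ≥ 1`, `M` is the internal direct sum of the invariants `M^{I_{≥n}}` and `𝔞_n M`;
equivalently the composite `M^{I_{≥n}} → M → M_{I_{≥n}}` is an isomorphism. -/
theorem invariants_coinvariants_iso (k : Type*) [Field k]
    (M : Type*) [AddCommGroup M] [Module (IncAlg k) M]
    (hsm : IsSmoothMod k M)
    (hlf : ∀ x : M, ∃ (m : ℕ) (v : Fin m → M),
      ∀ y ∈ Submodule.span (IncAlg k) ({x} : Set M),
        ∃ c : Fin m → k, y = ∑ i, algebraMap k (IncAlg k) (c i) • v i)
    (n : ℕ+) :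
    (∀ x : M, ∃ y ∈ invSet k M (Iges n), ∃ z ∈ augGrp k M n, x = y + z) ∧
    ∀ y ∈ invSet k M (Iges n), y ∈ augGrp k M n → y = 0 := by
  constructor
  · intro x
    obtain ⟨m₀, hm₀⟩ := uniform_bound hsm hlf x
    set m : ℕ := max m₀ (n:ℕ) with hmdef
    have hfix : ∀ y ∈ Submodule.span (IncAlg k) ({x} : Set M),
        ∀ σ ∈ Igt m, ofInc k σ • y = y :=
      fun y hy σ hσ => hm₀ y hy σ (Igt_mono (le_max_left _ _) hσ)
    have hmn : (n:ℕ) ≤ m := le_max_right _ _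
    have hsgmem : alpha n ^ (m+1-(n:ℕ)) ∈ Iges n :=
      pow_mem (alpha_mem_Iges le_rfl) _
    refine ⟨ofInc k (alpha n ^ (m+1-(n:ℕ))) • x, ?_,
      x - ofInc k (alpha n ^ (m+1-(n:ℕ))) • x, ?_, by abel⟩
    · intro σ hσ
      exact keyA n m hmn x hfix hσ
    · have : ofInc k (alpha n ^ (m+1-(n:ℕ))) • x - x ∈ augSet k M n :=
        ⟨alpha n ^ (m+1-(n:ℕ)), hsgmem, x, rfl⟩
      have h2 : ofInc k (alpha n ^ (m+1-(n:ℕ))) • x - x ∈ augGrp k M n :=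
        AddSubgroup.subset_closure this
      have h3 := neg_mem h2
      rwa [neg_sub] at h3
  · intro y hyinv hy
    have hP : ∃ m : ℕ, (n:ℕ) ≤ m ∧ ∀ m', m ≤ m' →
        ofInc k (alpha n ^ (m'+1-(n:ℕ))) • y = 0 := by
      refine AddSubgroup.closure_induction
        (p := fun z _ => ∃ m : ℕ, (n:ℕ) ≤ m ∧ ∀ m', m ≤ m' →
          ofInc k (alpha n ^ (m'+1-(n:ℕ))) • z = 0) ?_ ?_ ?_ ?_ hy
      · rintro _ ⟨τ, hτ, w, rfl⟩
        obtain ⟨m₀, hm₀⟩ := uniform_bound hsm hlf w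
        refine ⟨max m₀ (n:ℕ), le_max_right _ _, fun m' hm' => ?_⟩
        have hfix : ∀ z ∈ Submodule.span (IncAlg k) ({w} : Set M),
            ∀ σ ∈ Igt m', ofInc k σ • z = z :=
          fun z hz σ hσ => hm₀ z hz σ (Igt_mono (le_trans (le_max_left _ _) hm') hσ)
        have hs : m' < (n:ℕ) + (m'+1-(n:ℕ)) := by
          have : (n:ℕ) ≤ m' := le_trans (le_max_right _ _) hm'
          omega
        rw [smul_sub, keyB n m' w hfix hτ (m'+1-(n:ℕ)) hs w
          (Submodule.subset_span (Set.mem_singleton w)), sub_self]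
      · exact ⟨(n:ℕ), le_rfl, fun _ _ => smul_zero _⟩
      · rintro z₁ z₂ _ _ ⟨m₁, hm₁n, h₁⟩ ⟨m₂, hm₂n, h₂⟩
        refine ⟨max m₁ m₂, le_trans hm₁n (le_max_left _ _), fun m' hm' => ?_⟩
        rw [smul_add, h₁ m' (le_trans (le_max_left _ _) hm'),
          h₂ m' (le_trans (le_max_right _ _) hm'), add_zero]
      · rintro z _ ⟨m₁, hm₁n, h₁⟩
        exact ⟨m₁, hm₁n, fun m' hm' => by rw [smul_neg, h₁ m' hm', neg_zero]⟩
    obtain ⟨m, hmn, h⟩ := hP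
    have h0 : ofInc k (alpha n ^ (m+1-(n:ℕ))) • y = 0 := h m le_rfl
    have hinv : ofInc k (alpha n ^ (m+1-(n:ℕ))) • y = y :=
      hyinv _ (pow_mem (alpha_mem_Iges le_rfl) _)
    rw [hinv] at h0
    exact h0

end
end
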